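/- Replacing, in a graph, each vertex v of capacity 2 by two copies v1, v2 and joining every copy of v to every copy of each neighbor of v preserves capacitated biconnectivity: two capacity-1 vertices u, w are joined by a flow of value 2 respecting vertex capacities in the original graph if and only if u and w are biconnected (have two internally vertex-disjoint paths) in the transformed graph. -/

import Mathlib

open SimpleGraph

/-- The transformed graph: each capacity-2 vertex of `G` is replaced by two copies,
capacity-1 vertices keep a single copy, and every copy of a vertex is joined to every
copy of each of its neighbors. -/
def DoubledGraph {V : Type*} (G : SimpleGraph V) (cap : V → ℕ) :
    SimpleGraph {p : V × Fin 2 // p.2 = 0 ∨ cap p.1 = 2} where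
  Adj x y := G.Adj x.1.1 y.1.1
  symm := ⟨fun x y h => G.adj_symm h⟩
  loopless := ⟨fun x h => G.irrefl h⟩

/-- Lift a choice of copies to a homomorphism into the doubled graph. -/
def liftHom {V : Type*} (G : SimpleGraph V) (cap : V → ℕ) (g : V → Fin 2)
    (hg : ∀ v, g v = 0 ∨ cap v = 2) : G →g DoubledGraph G cap where
  toFun v := ⟨(v, g v), hg v⟩
  map_rel' h := h

lemma liftHom_injective {V : Type*} (G : SimpleGraph V) (cap : V → ℕ) (g : V → Fin 2)
    (hg : ∀ v, g v = 0 ∨ cap v = 2) : Function.Injective (liftHom G cap g hg) := by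
  intro a b h
  have := congrArg (fun y => y.1.1) h
  exact this

/-- The projection homomorphism from the doubled graph back to `G`. -/
def projHom {V : Type*} (G : SimpleGraph V) (cap : V → ℕ) :
    DoubledGraph G cap →g G where
  toFun x := x.1.1
  map_rel' h := h

theorem stmt16 {V : Type*} [DecidableEq V] (G : SimpleGraph V) (cap : V → ℕ)
    (hcap : ∀ v, cap v = 1 ∨ cap v = 2)
    (u w : V) (huw : u ≠ w) (hu : cap u = 1) (hw : cap w = 1) :
    (∃ p q : G.Walk u w, p.IsPath ∧ q.IsPath ∧
        ∀ v : V, v ≠ u → v ≠ w →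
          p.support.count v + q.support.count v ≤ cap v) ↔
      (∃ P Q : (DoubledGraph G cap).Walk
          ⟨(u, 0), Or.inl rfl⟩ ⟨(w, 0), Or.inl rfl⟩,
        P.IsPath ∧ Q.IsPath ∧
          ∀ x, x ∈ P.support → x ∈ Q.support →
            x = ⟨(u, 0), Or.inl rfl⟩ ∨ x = ⟨(w, 0), Or.inl rfl⟩) := by
  classical
  constructor
  · rintro ⟨p, q, hp, hq, hcount⟩
    set g : V → Fin 2 := fun v => if cap v = 2 ∧ v ∈ p.support then 1 else 0 with hgdef
    have hg : ∀ v, g v = 0 ∨ cap v = 2 := by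
      intro v
      by_cases h : cap v = 2 ∧ v ∈ p.support
      · exact Or.inr h.1
      · left; simp [hgdef, h]
    set φ0 := liftHom G cap (fun _ => 0) (fun _ => Or.inl rfl) with hφ0
    set φ := liftHom G cap g hg with hφ
    have hgu : g u = 0 := by simp [hgdef, hu]
    have hgw : g w = 0 := by simp [hgdef, hw]
    have e1 : φ u = (⟨(u, 0), Or.inl rfl⟩ : {p : V × Fin 2 // p.2 = 0 ∨ cap p.1 = 2}) :=
      Subtype.ext (Prod.ext rfl hgu)
    have e2 : φ w = (⟨(w, 0), Or.inl rfl⟩ : {p : V × Fin 2 // p.2 = 0 ∨ cap p.1 = 2}) :=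
      Subtype.ext (Prod.ext rfl hgw)
    refine ⟨p.map φ0, (q.map φ).copy e1 e2, ?_, ?_, ?_⟩
    · exact SimpleGraph.Walk.map_isPath_of_injective (liftHom_injective G cap _ _) hp
    · rw [SimpleGraph.Walk.isPath_copy]
      exact SimpleGraph.Walk.map_isPath_of_injective (liftHom_injective G cap _ _) hq
    · intro x hxP hxQ
      rw [SimpleGraph.Walk.support_copy, SimpleGraph.Walk.support_map] at hxQ
      replace hxP : x ∈ (p.map φ0).support := hxP; rw [SimpleGraph.Walk.support_map] at hxP
      obtain ⟨a, haP, rfl⟩ := List.mem_map.mp hxP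
      obtain ⟨b, hbQ, hba⟩ := List.mem_map.mp hxQ
      have hfst : b = a := by
        have := congrArg (fun y => y.1.1) hba
        exact this
      subst hfst
      have hsnd : g b = 0 := by
        have := congrArg (fun y => y.1.2) hba
        exact this
      by_cases hbu : b = u
      · subst hbu; left; rfl
      by_cases hbw : b = w
      · subst hbw; right; rfl
      · exfalso
        have hcapb : cap b = 1 := by
          rcases hcap b with h1 | h2
          · exact h1
          · exfalso
            have : g b = 1 := by simp [hgdef, h2, haP]
            rw [hsnd] at this
            exact absurd this (by decide)
        have h1 : 1 ≤ p.support.count b := List.count_pos_iff.mpr haP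
        have h2 : 1 ≤ q.support.count b := List.count_pos_iff.mpr hbQ
        have := hcount b hbu hbw
        omega
  · rintro ⟨P, Q, hP, hQ, hdisj⟩
    set π := projHom G cap with hπ
    refine ⟨(P.map π).bypass, (Q.map π).bypass, SimpleGraph.Walk.bypass_isPath _,
      SimpleGraph.Walk.bypass_isPath _, ?_⟩
    intro v hvu hvw
    have hcp : ((P.map π).bypass.support (u := u) (v := w)).count v ≤ 1 :=
      List.nodup_iff_count_le_one.mp (SimpleGraph.Walk.bypass_isPath _).support_nodup v
    have hcq : ((Q.map π).bypass.support (u := u) (v := w)).count v ≤ 1 :=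
      List.nodup_iff_count_le_one.mp (SimpleGraph.Walk.bypass_isPath _).support_nodup v
    rcases hcap v with h1 | h2
    · -- cap v = 1 : v cannot be in both supports
      rw [h1]
      by_cases hvp : v ∈ (P.map π).bypass.support
      · by_cases hvq : v ∈ (Q.map π).bypass.support
        · exfalso
          have hvP : v ∈ (P.map π).support := SimpleGraph.Walk.support_bypass_subset _ hvp
          have hvQ : v ∈ (Q.map π).support := SimpleGraph.Walk.support_bypass_subset _ hvq
          rw [SimpleGraph.Walk.support_map] at hvP hvQ
          obtain ⟨x, hxP, hx⟩ := List.mem_map.mp hvP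
          obtain ⟨y, hyQ, hy⟩ := List.mem_map.mp hvQ
          have hx1 : x.1.1 = v := hx
          have hy1 : y.1.1 = v := hy
          have hx2 : x.1.2 = 0 := x.2.resolve_right (by rw [hx1, h1]; omega)
          have hy2 : y.1.2 = 0 := y.2.resolve_right (by rw [hy1, h1]; omega)
          have hxy : x = y := Subtype.ext (Prod.ext (hx1.trans hy1.symm) (hx2.trans hy2.symm))
          rcases hdisj x hxP (hxy ▸ hyQ) with h | h
          · exact hvu (hx1 ▸ congrArg (fun z => z.1.1) h)
          · exact hvw (hx1 ▸ congrArg (fun z => z.1.1) h)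
        · have : ((Q.map π).bypass.support (u := u) (v := w)).count v = 0 := List.count_eq_zero.mpr hvq
          omega
      · have : ((P.map π).bypass.support (u := u) (v := w)).count v = 0 := List.count_eq_zero.mpr hvp
        omega
    · rw [h2]; omega
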